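/- Let v_1, …, v_m ∈ ℝ^d and w_1, …, w_n ∈ ℝ^d, let f : ℝ → ℝ be strictly increasing, and let A be the m×n matrix with A_{ij} = f(⟨v_i, w_j⟩). If i is an extremal node of A — i.e., there is a column j such that A_{ij} < A_{kj} for all k ≠ i, or a column j such that A_{ij} > A_{kj} for all k ≠ i — then v_i is an extreme point of the convex hull of {v_1, …, v_m}. -/

import Mathlib

lemma extreme_of_strict_min {m d : ℕ} (v : Fin m → Fin d → ℝ) (i : Fin m)
    (L : (Fin d → ℝ) →ₗ[ℝ] ℝ) (h : ∀ k, k ≠ i → L (v i) < L (v k)) :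
    v i ∈ Set.extremePoints ℝ (convexHull ℝ (Set.range v)) := by
  have hmem : v i ∈ convexHull ℝ (Set.range v) :=
    subset_convexHull ℝ _ ⟨i, rfl⟩
  have hmin : ∀ x ∈ convexHull ℝ (Set.range v), L (v i) ≤ L x := by
    intro x hx
    have hsub : convexHull ℝ (Set.range v) ⊆ {x | L (v i) ≤ L x} := by
      apply convexHull_min
      · rintro _ ⟨k, rfl⟩
        by_cases hk : k = i
        · simp [hk]
        · exact (h k hk).le
      · exact convex_halfSpace_ge (LinearMap.isLinear L) _
    exact hsub hx
  have hface : ∀ x ∈ convexHull ℝ (Set.range v), L x = L (v i) → x = v i := by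
    intro x hx hLx
    obtain ⟨ι, _, t, z, ht0, ht1, hz, hxeq⟩ := mem_convexHull_iff_exists_fintype.1 hx
    have hzc : ∀ j, L (v i) ≤ L (z j) := by
      intro j
      obtain ⟨k, hk⟩ := hz j
      by_cases hki : k = i
      · simp [← hk, hki]
      · exact (le_of_lt (h k hki)).trans_eq (by rw [hk])
    have hsum0 : ∑ j, t j * (L (z j) - L (v i)) = 0 := by
      have : ∑ j, t j * (L (z j) - L (v i))
          = L x - L (v i) := by
        rw [← hxeq, map_sum]
        simp only [mul_sub, Finset.sum_sub_distrib, ← Finset.sum_mul, ht1, one_mul]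
        simp [map_smul, smul_eq_mul]
      rw [this, hLx, sub_self]
    have hterm : ∀ j ∈ Finset.univ, t j * (L (z j) - L (v i)) = 0 := by
      rw [← Finset.sum_eq_zero_iff_of_nonneg]
      · exact hsum0
      · intro j _
        exact mul_nonneg (ht0 j) (sub_nonneg.2 (hzc j))
    have hzi : ∀ j, t j • z j = t j • v i := by
      intro j
      rcases mul_eq_zero.1 (hterm j (Finset.mem_univ j)) with h0 | h0
      · rw [h0]; simp
      · have hLz : L (z j) = L (v i) := by linarith [sub_eq_zero.1 h0]
        obtain ⟨k, hk⟩ := hz j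
        by_cases hki : k = i
        · rw [← hk, hki]
        · exfalso; rw [← hk] at hLz; exact absurd hLz (ne_of_gt (h k hki))
    rw [← hxeq]
    calc ∑ j, t j • z j = ∑ j, t j • v i := by simp_rw [hzi]
      _ = (∑ j, t j) • v i := by rw [Finset.sum_smul]
      _ = v i := by rw [ht1, one_smul]
  refine ⟨hmem, ?_⟩
  intro x1 hx1 x2 hx2 hseg
  obtain ⟨a, b, ha, hb, hab, habeq⟩ := hseg
  have h1 : L (v i) ≤ L x1 := hmin x1 hx1
  have h2 : L (v i) ≤ L x2 := hmin x2 hx2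
  have hLeq : a * L x1 + b * L x2 = L (v i) := by
    rw [← habeq]; simp [map_add, map_smul, smul_eq_mul]
  have e : a * (L x1 - L (v i)) + b * (L x2 - L (v i)) = 0 := by
    have h' : a * L (v i) + b * L (v i) = L (v i) := by rw [← add_mul, hab, one_mul]
    nlinarith [hLeq, h']
  have t1 : 0 ≤ a * (L x1 - L (v i)) := mul_nonneg ha.le (sub_nonneg.2 h1)
  have t2 : 0 ≤ b * (L x2 - L (v i)) := mul_nonneg hb.le (sub_nonneg.2 h2)
  have z1 : a * (L x1 - L (v i)) = 0 := by linarith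
  have z2 : b * (L x2 - L (v i)) = 0 := by linarith
  have hLx1 : L x1 = L (v i) := by
    rcases mul_eq_zero.1 z1 with h0 | h0
    · exact absurd h0 ha.ne'
    · exact sub_eq_zero.1 h0
  have hLx2 : L x2 = L (v i) := by
    rcases mul_eq_zero.1 z2 with h0 | h0
    · exact absurd h0 hb.ne'
    · exact sub_eq_zero.1 h0
  exact hface x1 hx1 hLx1

/-- If `A_{ij} = f(⟨v_i, w_j⟩)` with `f` strictly increasing, and `i` is an extremal
node of `A` (some column attains its unique minimum or unique maximum in row `i`),
then `v_i` is an extreme point of the convex hull of `{v_1, …, v_m}`. -/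
theorem stmt12 {m n d : ℕ} (v : Fin m → Fin d → ℝ) (w : Fin n → Fin d → ℝ)
    (f : ℝ → ℝ) (hf : StrictMono f) (A : Matrix (Fin m) (Fin n) ℝ)
    (hA : ∀ i j, A i j = f (∑ k, v i k * w j k))
    (i : Fin m)
    (hext : (∃ j, ∀ k, k ≠ i → A i j < A k j) ∨ (∃ j, ∀ k, k ≠ i → A k j < A i j)) :
    v i ∈ Set.extremePoints ℝ (convexHull ℝ (Set.range v)) := by
  rcases hext with ⟨j, hj⟩ | ⟨j, hj⟩
  · set L : (Fin d → ℝ) →ₗ[ℝ] ℝ := ∑ k, w j k • LinearMap.proj k with hL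
    have hLapp : ∀ x : Fin d → ℝ, L x = ∑ k, x k * w j k := by
      intro x
      simp [hL, LinearMap.sum_apply, smul_eq_mul, mul_comm]
    refine extreme_of_strict_min v i L ?_
    intro k hk
    have := hj k hk
    rw [hA, hA] at this
    rw [hLapp, hLapp]
    exact hf.lt_iff_lt.1 this
  · set L : (Fin d → ℝ) →ₗ[ℝ] ℝ := -∑ k, w j k • LinearMap.proj k with hL
    have hLapp : ∀ x : Fin d → ℝ, L x = -∑ k, x k * w j k := by
      intro x
      simp [hL, LinearMap.sum_apply, smul_eq_mul, mul_comm]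
    refine extreme_of_strict_min v i L ?_
    intro k hk
    have := hj k hk
    rw [hA, hA] at this
    rw [hLapp, hLapp]
    have := hf.lt_iff_lt.1 this
    linarith
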